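/- Moments of the trimodal distribution: let n ≥ 1 be an integer and assume E|W|^n < ∞ and E|X|^n < ∞ for X ~ TD(θ). Then E(X^n) = Σ_{k=0}^{n} C(n,k)·μ^{n−k}·σ^k·{ ((ρ+δ)σ/Z_θ)·E(W^k) + (δσ/Z_θ)·[ E(𝟙{W ≤ −α√Y}·W^k) − E(𝟙{W ≤ α√Y}·W^k) ] }, where C(n,k) is the binomial coefficient and the truncated moments are E(𝟙{W ≤ ±α√Y}·W^k) = ∫₀^∞ ( ∫_{−∞}^{±α√y} w^k g(w) dw )·y^{p−1}e^{−y}/Γ(p) dy. -/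

import Mathlib

open MeasureTheory Real Set Filter

noncomputable def lincGamma (p u : ℝ) : ℝ := ∫ w in (0:ℝ)..u, w ^ (p - 1) * Real.exp (-w)

noncomputable def Tfun (p α x : ℝ) : ℝ := lincGamma p (x ^ 2 / α ^ 2) / Real.Gamma p

noncomputable def gammaPDF (p y : ℝ) : ℝ := y ^ (p - 1) * Real.exp (-y) / Real.Gamma p

noncomputable def Znorm (p σ α ρ δ : ℝ) (g : ℝ → ℝ) : ℝ :=
  σ * ∫ w : ℝ, (ρ + δ * Tfun p α w) * g w

noncomputable def tdPDF (p μ σ α ρ δ : ℝ) (g : ℝ → ℝ) (x : ℝ) : ℝ :=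
  (1 / Znorm p σ α ρ δ g) * (ρ + δ * Tfun p α ((x - μ) / σ)) * g ((x - μ) / σ)

noncomputable def cdfOf (d : ℝ → ℝ) (x : ℝ) : ℝ := ∫ t in Iic x, d t

lemma gammaPDF_integrableOn {p : ℝ} (hp : 0 < p) : IntegrableOn (gammaPDF p) (Ioi 0) := by
  have h := Real.GammaIntegral_convergent hp
  have : gammaPDF p = fun y => (Real.exp (-y) * y ^ (p - 1)) * (Real.Gamma p)⁻¹ := by
    funext y; simp [gammaPDF]; ring
  rw [this]
  exact h.mul_const _

lemma gammaPDF_integral {p : ℝ} (hp : 0 < p) : ∫ y in Ioi (0:ℝ), gammaPDF p y = 1 := by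
  have h1 : ∫ y in Ioi (0:ℝ), gammaPDF p y
      = (∫ y in Ioi (0:ℝ), Real.exp (-y) * y ^ (p - 1)) / Real.Gamma p := by
    rw [← integral_div]
    refine setIntegral_congr_fun measurableSet_Ioi (fun y _ => ?_)
    simp [gammaPDF]; ring
  rw [h1, ← Real.Gamma_eq_integral hp,
    div_self (Real.Gamma_pos_of_pos hp).ne']

lemma lincGamma_nonneg {p : ℝ} {u : ℝ} (hu : 0 ≤ u) : 0 ≤ lincGamma p u := by
  refine intervalIntegral.integral_nonneg hu (fun t ht => ?_)
  exact mul_nonneg (Real.rpow_nonneg ht.1 _) (Real.exp_pos _).le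

lemma Tfun_eq {p α : ℝ} (hp : 0 < p) (hα : 0 < α) (w : ℝ) :
    Tfun p α w = ∫ y in Ioi (0:ℝ), (Iic (w ^ 2 / α ^ 2)).indicator (gammaPDF p) y := by
  rw [integral_indicator measurableSet_Iic, Measure.restrict_restrict measurableSet_Iic,
    Set.Iic_inter_Ioi]
  have h0 : (0:ℝ) ≤ w ^ 2 / α ^ 2 := by positivity
  have : ∫ y in Ioc (0:ℝ) (w ^ 2 / α ^ 2), gammaPDF p y
      = (∫ y in Ioc (0:ℝ) (w ^ 2 / α ^ 2), y ^ (p - 1) * Real.exp (-y)) / Real.Gamma p := by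
    rw [← integral_div]; rfl
  rw [this, Tfun, lincGamma, intervalIntegral.integral_of_le h0]

lemma Tfun_nonneg {p α : ℝ} (hp : 0 < p) (hα : 0 < α) (w : ℝ) : 0 ≤ Tfun p α w :=
  div_nonneg (lincGamma_nonneg (by positivity)) (Real.Gamma_pos_of_pos hp).le

lemma Tfun_le_one {p α : ℝ} (hp : 0 < p) (hα : 0 < α) (w : ℝ) : Tfun p α w ≤ 1 := by
  rw [Tfun, div_le_one (Real.Gamma_pos_of_pos hp)]
  have h0 : (0:ℝ) ≤ w ^ 2 / α ^ 2 := by positivity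
  rw [lincGamma, intervalIntegral.integral_of_le h0, Real.Gamma_eq_integral hp]
  have hmono : ∫ y in Ioc (0:ℝ) (w ^ 2 / α ^ 2), y ^ (p - 1) * Real.exp (-y)
      ≤ ∫ y in Ioi (0:ℝ), y ^ (p - 1) * Real.exp (-y) := by
    refine setIntegral_mono_set ?_ ?_ (HasSubset.Subset.eventuallyLE Ioc_subset_Ioi_self)
    · exact ((Real.GammaIntegral_convergent hp).congr_fun
        (fun y _ => by ring) measurableSet_Ioi)
    · filter_upwards [self_mem_ae_restrict measurableSet_Ioi] with y hy
      exact mul_nonneg (Real.rpow_nonneg (le_of_lt hy) _) (Real.exp_pos _).le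
  refine hmono.trans (le_of_eq ?_)
  refine setIntegral_congr_fun measurableSet_Ioi (fun y _ => by ring)

lemma gammaPDF_measurable (p : ℝ) : Measurable (gammaPDF p) := by
  unfold gammaPDF; fun_prop

lemma Tfun_measurable {p α : ℝ} (hp : 0 < p) (hα : 0 < α) : Measurable (Tfun p α) := by
  have heq : Tfun p α = fun w =>
      ∫ y, ({q : ℝ × ℝ | q.2 ≤ q.1 ^ 2 / α ^ 2}.indicator (fun q => gammaPDF p q.2)) (w, y)
        ∂(volume.restrict (Ioi (0:ℝ))) := by
    funext w
    rw [Tfun_eq hp hα]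
    refine integral_congr_ae (Filter.Eventually.of_forall fun y => ?_)
    by_cases h : y ≤ w ^ 2 / α ^ 2 <;> simp [Set.indicator, h]
  rw [heq]
  have hS : MeasurableSet {q : ℝ × ℝ | q.2 ≤ q.1 ^ 2 / α ^ 2} := by
    apply measurableSet_le measurable_snd
    fun_prop
  exact (StronglyMeasurable.integral_prod_right'
    (((gammaPDF_measurable p).comp measurable_snd).stronglyMeasurable.indicator hS)).measurable

def Sa (α : ℝ) : Set (ℝ × ℝ) := {q | q.2 ≤ q.1 ^ 2 / α ^ 2}
def Sb (α : ℝ) : Set (ℝ × ℝ) := {q | q.1 ≤ -α * Real.sqrt q.2}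
def Sc (α : ℝ) : Set (ℝ × ℝ) := {q | q.1 ≤ α * Real.sqrt q.2}
noncomputable def Hk (p : ℝ) (g : ℝ → ℝ) (k : ℕ) : ℝ × ℝ → ℝ :=
  fun q => q.1 ^ k * g q.1 * gammaPDF p q.2

lemma moment_split {p α : ℝ} (hp : 0 < p) (hα : 0 < α)
    (g : ℝ → ℝ) (hg0 : ∀ x, 0 ≤ g x) (hgm : Measurable g) (k : ℕ)
    (hk : Integrable (fun w : ℝ => |w| ^ k * g w)) :
    Integrable (fun w : ℝ => w ^ k * (Tfun p α w * g w)) ∧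
    (∫ w : ℝ, w ^ k * (Tfun p α w * g w))
      = (∫ w : ℝ, w ^ k * g w)
        + ((∫ y in Ioi (0:ℝ), (∫ w in Iic (-α * Real.sqrt y), w ^ k * g w) * gammaPDF p y)
          - (∫ y in Ioi (0:ℝ), (∫ w in Iic (α * Real.sqrt y), w ^ k * g w) * gammaPDF p y)) := by
  have hα2 : (0:ℝ) < α ^ 2 := by positivity
  have hf1m : Measurable (fun w : ℝ => w ^ k * g w) := by fun_prop
  have hf1i : Integrable (fun w : ℝ => w ^ k * g w) := by
    refine hk.mono' hf1m.aestronglyMeasurable (Filter.Eventually.of_forall fun w => ?_)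
    rw [Real.norm_eq_abs, abs_mul, abs_pow, abs_of_nonneg (hg0 w)]
  have hγi : IntegrableOn (gammaPDF p) (Ioi 0) := gammaPDF_integrableOn hp
  have hHi : Integrable (Hk p g k) (volume.prod (volume.restrict (Ioi (0:ℝ)))) :=
    hf1i.mul_prod hγi
  have hS : MeasurableSet (Sa α) := measurableSet_le measurable_snd (by fun_prop)
  have hS1 : MeasurableSet (Sb α) := measurableSet_le measurable_fst (by fun_prop)
  have hS3 : MeasurableSet (Sc α) := measurableSet_le measurable_fst (by fun_prop)
  have hFi : Integrable ((Sa α).indicator (Hk p g k)) (volume.prod (volume.restrict (Ioi (0:ℝ)))) :=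
    hHi.indicator hS
  have hF1i : Integrable ((Sb α).indicator (Hk p g k)) (volume.prod (volume.restrict (Ioi (0:ℝ)))) :=
    hHi.indicator hS1
  have hF3i : Integrable ((Sc α).indicator (Hk p g k)) (volume.prod (volume.restrict (Ioi (0:ℝ)))) :=
    hHi.indicator hS3
  -- inner integral in y for the Sa piece
  have inner1 : ∀ w : ℝ,
      (∫ y, (Sa α).indicator (Hk p g k) (w, y) ∂(volume.restrict (Ioi (0:ℝ))))
        = w ^ k * (Tfun p α w * g w) := by
    intro w
    have e1 : (fun y => (Sa α).indicator (Hk p g k) (w, y))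
        = (Iic (w ^ 2 / α ^ 2)).indicator fun y => (w ^ k * g w) * gammaPDF p y := by
      funext y
      by_cases h : y ≤ w ^ 2 / α ^ 2 <;> simp [Set.indicator, Sa, Hk, h, mul_assoc]
    rw [e1, integral_indicator measurableSet_Iic, integral_const_mul,
      ← integral_indicator measurableSet_Iic, ← Tfun_eq hp hα]
    ring
  -- null sets
  have hnull1 : (volume.prod (volume.restrict (Ioi (0:ℝ)))) {q : ℝ × ℝ | q.2 ≤ 0} = 0 := by
    have he : {q : ℝ × ℝ | q.2 ≤ 0} = (univ : Set ℝ) ×ˢ Iic (0:ℝ) := by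
      ext q; exact ⟨fun h => ⟨trivial, h⟩, fun h => h.2⟩
    rw [he, Measure.prod_prod]
    have : (volume.restrict (Ioi (0:ℝ))) (Iic 0) = 0 := by
      rw [Measure.restrict_apply' measurableSet_Ioi, Set.Iic_inter_Ioi, Set.Ioc_self]
      exact measure_empty
    rw [this, mul_zero]
  have hnull2 :
      (volume.prod (volume.restrict (Ioi (0:ℝ)))) {q : ℝ × ℝ | q.1 = α * Real.sqrt q.2} = 0 := by
    have hm : MeasurableSet {q : ℝ × ℝ | q.1 = α * Real.sqrt q.2} :=
      measurableSet_eq_fun measurable_fst (by fun_prop)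
    rw [Measure.measure_prod_null hm]
    refine Filter.Eventually.of_forall fun w => ?_
    have hsub : Prod.mk w ⁻¹' {q : ℝ × ℝ | q.1 = α * Real.sqrt q.2}
        ⊆ {(w / α) ^ 2} ∪ Iic 0 := by
      intro y hy
      simp only [mem_preimage, mem_setOf_eq] at hy
      rcases le_or_gt y 0 with h | h
      · exact Or.inr h
      · left
        have hs : Real.sqrt y = w / α := by
          field_simp
          linarith [hy]
        have hy2 : y = Real.sqrt y ^ 2 := (Real.sq_sqrt h.le).symm
        rw [mem_singleton_iff, hy2, hs]
    refine measure_mono_null hsub ?_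
    rw [Measure.restrict_apply' measurableSet_Ioi]
    refine measure_mono_null (fun z hz => ?_) (measure_singleton ((w / α) ^ 2))
    rcases hz.1 with h | h
    · exact h
    · exact absurd hz.2 (by simpa using h)
  -- a.e. decomposition
  have hae : (Sa α).indicator (Hk p g k)
      =ᵐ[volume.prod (volume.restrict (Ioi (0:ℝ)))]
      fun q => (Sb α).indicator (Hk p g k) q
        + (Hk p g k q - (Sc α).indicator (Hk p g k) q) := by
    have h1 : ∀ᵐ (q : ℝ × ℝ) ∂(volume.prod (volume.restrict (Ioi (0:ℝ)))), 0 < q.2 := by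
      rw [ae_iff]
      convert hnull1 using 2
      ext q; simp [not_lt]
    have h2 : ∀ᵐ (q : ℝ × ℝ) ∂(volume.prod (volume.restrict (Ioi (0:ℝ)))),
        q.1 ≠ α * Real.sqrt q.2 := by
      rw [ae_iff]
      convert hnull2 using 2
      ext q; simp
    filter_upwards [h1, h2] with q hq1 hq2
    obtain ⟨w, y⟩ := q
    simp only at hq1 hq2
    have hsy : 0 < Real.sqrt y := Real.sqrt_pos.2 hq1
    have hc : 0 < α * Real.sqrt y := mul_pos hα hsy
    have hcsq : (α * Real.sqrt y) ^ 2 = α ^ 2 * y := by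
      rw [mul_pow, Real.sq_sqrt hq1.le]
    rcases le_or_gt w (-α * Real.sqrt y) with h1' | h1'
    · have hinS : (w, y) ∈ Sa α := by
        simp only [Sa, mem_setOf_eq]
        rw [le_div_iff₀ hα2]
        nlinarith
      have hinS3 : (w, y) ∈ Sc α := by
        simp only [Sc, mem_setOf_eq]
        nlinarith
      have hinS1 : (w, y) ∈ Sb α := h1'
      rw [indicator_of_mem hinS, indicator_of_mem hinS1, indicator_of_mem hinS3]
      ring
    · rcases lt_trichotomy w (α * Real.sqrt y) with h3' | h3' | h3'
      · have hninS : (w, y) ∉ Sa α := by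
          simp only [Sa, mem_setOf_eq, not_le]
          rw [div_lt_iff₀ hα2]
          nlinarith
        have hinS3 : (w, y) ∈ Sc α := h3'.le
        have hninS1 : (w, y) ∉ Sb α := not_le.2 h1'
        rw [indicator_of_notMem hninS, indicator_of_notMem hninS1, indicator_of_mem hinS3]
        ring
      · exact absurd h3' hq2
      · have hinS : (w, y) ∈ Sa α := by
          simp only [Sa, mem_setOf_eq]
          rw [le_div_iff₀ hα2]
          nlinarith
        have hninS1 : (w, y) ∉ Sb α := by
          simp only [Sb, mem_setOf_eq, not_le]
          nlinarith
        have hninS3 : (w, y) ∉ Sc α := not_le.2 h3'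
        rw [indicator_of_mem hinS, indicator_of_notMem hninS1, indicator_of_notMem hninS3]
        ring
  -- product integral of the Sa piece equals the T-integral
  have hleft : (∫ q, (Sa α).indicator (Hk p g k) q ∂(volume.prod (volume.restrict (Ioi (0:ℝ)))))
      = ∫ w : ℝ, w ^ k * (Tfun p α w * g w) := by
    rw [integral_prod _ hFi]
    exact integral_congr_ae (Filter.Eventually.of_forall fun w => inner1 w)
  -- product integrals of the three pieces
  have hright1 : (∫ q, (Sb α).indicator (Hk p g k) q ∂(volume.prod (volume.restrict (Ioi (0:ℝ)))))
      = ∫ y in Ioi (0:ℝ), (∫ w in Iic (-α * Real.sqrt y), w ^ k * g w) * gammaPDF p y := by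
    rw [integral_prod_symm _ hF1i]
    refine integral_congr_ae (Filter.Eventually.of_forall fun y => ?_)
    show (∫ w : ℝ, (Sb α).indicator (Hk p g k) (w, y))
      = (∫ w in Iic (-α * Real.sqrt y), w ^ k * g w) * gammaPDF p y
    have e1 : (fun w => (Sb α).indicator (Hk p g k) (w, y))
        = (Iic (-α * Real.sqrt y)).indicator fun w => (w ^ k * g w) * gammaPDF p y := by
      funext w
      by_cases h : w ≤ -α * Real.sqrt y <;> simp [Set.indicator, Sb, Hk, h]
    rw [e1, integral_indicator measurableSet_Iic, integral_mul_const]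
  have hright3 : (∫ q, (Sc α).indicator (Hk p g k) q ∂(volume.prod (volume.restrict (Ioi (0:ℝ)))))
      = ∫ y in Ioi (0:ℝ), (∫ w in Iic (α * Real.sqrt y), w ^ k * g w) * gammaPDF p y := by
    rw [integral_prod_symm _ hF3i]
    refine integral_congr_ae (Filter.Eventually.of_forall fun y => ?_)
    show (∫ w : ℝ, (Sc α).indicator (Hk p g k) (w, y))
      = (∫ w in Iic (α * Real.sqrt y), w ^ k * g w) * gammaPDF p y
    have e1 : (fun w => (Sc α).indicator (Hk p g k) (w, y))
        = (Iic (α * Real.sqrt y)).indicator fun w => (w ^ k * g w) * gammaPDF p y := by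
      funext w
      by_cases h : w ≤ α * Real.sqrt y <;> simp [Set.indicator, Sc, Hk, h]
    rw [e1, integral_indicator measurableSet_Iic, integral_mul_const]
  have hrightH : (∫ q, Hk p g k q ∂(volume.prod (volume.restrict (Ioi (0:ℝ)))))
      = ∫ w : ℝ, w ^ k * g w := by
    rw [integral_prod_symm _ hHi]
    have e1 : ∀ y : ℝ, (∫ w : ℝ, Hk p g k (w, y))
        = (∫ w : ℝ, w ^ k * g w) * gammaPDF p y := by
      intro y
      simp only [Hk]
      exact integral_mul_const _ _
    rw [integral_congr_ae (Filter.Eventually.of_forall e1), integral_const_mul,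
      gammaPDF_integral hp, mul_one]
  have hmain : (∫ q, (Sa α).indicator (Hk p g k) q ∂(volume.prod (volume.restrict (Ioi (0:ℝ)))))
      = (∫ q, (Sb α).indicator (Hk p g k) q ∂(volume.prod (volume.restrict (Ioi (0:ℝ)))))
        + ((∫ q, Hk p g k q ∂(volume.prod (volume.restrict (Ioi (0:ℝ)))))
          - ∫ q, (Sc α).indicator (Hk p g k) q ∂(volume.prod (volume.restrict (Ioi (0:ℝ)))))
      := by
    have hsubi : Integrable
        (fun q => Hk p g k q - (Sc α).indicator (Hk p g k) q)
        (volume.prod (volume.restrict (Ioi (0:ℝ)))) := hHi.sub hF3i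
    rw [integral_congr_ae hae, integral_add hF1i hsubi, integral_sub hHi hF3i]
  constructor
  · exact (hFi.integral_prod_left).congr (Filter.Eventually.of_forall inner1)
  · rw [← hleft, hmain, hright1, hright3, hrightH]
    ring

noncomputable def phiAux (p μ σ α ρ δ Zv : ℝ) (g : ℝ → ℝ) (n : ℕ) (w : ℝ) : ℝ :=
  (μ + σ * w) ^ n * (1 / Zv * (ρ + δ * Tfun p α w) * g w)

/-- formula for the `n`-th moment of the trimodal distribution. -/
theorem stmt8 (p μ σ α ρ δ : ℝ) (hp : 0 < p) (hσ : 0 < σ) (hα : 0 < α)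
    (hρ : 0 ≤ ρ) (hδ : 0 ≤ δ) (hρδ : 0 < ρ + δ)
    (g : ℝ → ℝ) (hg0 : ∀ x, 0 ≤ g x) (hgm : Measurable g)
    (hgi : Integrable g) (hg1 : (∫ x : ℝ, g x) = 1)
    (n : ℕ) (hn : 1 ≤ n)
    (hW : Integrable (fun w : ℝ => |w| ^ n * g w))
    (hX : Integrable (fun x : ℝ => |x| ^ n * tdPDF p μ σ α ρ δ g x)) :
    (∫ x : ℝ, x ^ n * tdPDF p μ σ α ρ δ g x)
      = ∑ k ∈ Finset.range (n + 1),
          (n.choose k : ℝ) * μ ^ (n - k) * σ ^ k *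
            (((ρ + δ) * σ / Znorm p σ α ρ δ g) * (∫ w : ℝ, w ^ k * g w)
              + (δ * σ / Znorm p σ α ρ δ g) *
                  ((∫ y in Ioi (0:ℝ),
                      (∫ w in Iic (-α * Real.sqrt y), w ^ k * g w) * gammaPDF p y)
                    - (∫ y in Ioi (0:ℝ),
                        (∫ w in Iic (α * Real.sqrt y), w ^ k * g w) * gammaPDF p y))) := by
  have hpt : ∀ x : ℝ, x ^ n * tdPDF p μ σ α ρ δ g x
      = phiAux p μ σ α ρ δ (Znorm p σ α ρ δ g) g n ((x - μ) / σ) := by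
    intro x
    have hx : μ + σ * ((x - μ) / σ) = x := by field_simp; ring
    simp only [phiAux, tdPDF, hx]
    try ring
  have hcv : (∫ x : ℝ, x ^ n * tdPDF p μ σ α ρ δ g x)
      = σ * ∫ w : ℝ, phiAux p μ σ α ρ δ (Znorm p σ α ρ δ g) g n w := by
    rw [integral_congr_ae (Filter.Eventually.of_forall hpt)]
    have he : (fun x : ℝ => phiAux p μ σ α ρ δ (Znorm p σ α ρ δ g) g n ((x - μ) / σ))
        = fun x : ℝ =>
            (fun t => phiAux p μ σ α ρ δ (Znorm p σ α ρ δ g) g n (t / σ)) (x - μ) := rfl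
    rw [he, integral_sub_right_eq_self
        (fun t => phiAux p μ σ α ρ δ (Znorm p σ α ρ δ g) g n (t / σ)) μ,
      Measure.integral_comp_div (phiAux p μ σ α ρ δ (Znorm p σ α ρ δ g) g n) σ,
      abs_of_pos hσ, smul_eq_mul]
  have hbin : ∀ w : ℝ, phiAux p μ σ α ρ δ (Znorm p σ α ρ δ g) g n w
      = ∑ k ∈ Finset.range (n + 1),
          ((n.choose k : ℝ) * μ ^ (n - k) * σ ^ k) *
            (w ^ k * (1 / Znorm p σ α ρ δ g * (ρ + δ * Tfun p α w) * g w)) := by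
    intro w
    simp only [phiAux]
    rw [add_comm μ (σ * w), add_pow, Finset.sum_mul]
    exact Finset.sum_congr rfl fun k _ => by ring
  have hWk : ∀ k, k ≤ n → Integrable (fun w : ℝ => |w| ^ k * g w) := by
    intro k hkn
    refine (hgi.add hW).mono'
      ((measurable_abs.pow_const k).mul hgm).aestronglyMeasurable
      (Filter.Eventually.of_forall fun w => ?_)
    have h1 : |w| ^ k ≤ 1 + |w| ^ n := by
      rcases le_total |w| 1 with h | h
      · have h2 := pow_le_one₀ (n := k) (abs_nonneg w) h
        have h3 : (0:ℝ) ≤ |w| ^ n := pow_nonneg (abs_nonneg w) n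
        linarith
      · have h2 := pow_le_pow_right₀ h hkn
        linarith
    simp only [Pi.add_apply, Real.norm_eq_abs, abs_mul, abs_pow, abs_abs,
      abs_of_nonneg (hg0 w)]
    calc |w| ^ k * g w ≤ (1 + |w| ^ n) * g w := mul_le_mul_of_nonneg_right h1 (hg0 w)
      _ = g w + |w| ^ n * g w := by ring
  have hk1 : ∀ k, k ≤ n → Integrable (fun w : ℝ => w ^ k * g w) := by
    intro k hkn
    refine (hWk k hkn).mono'
      ((measurable_id.pow_const k).mul hgm).aestronglyMeasurable
      (Filter.Eventually.of_forall fun w => ?_)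
    rw [Real.norm_eq_abs, abs_mul, abs_pow, abs_of_nonneg (hg0 w)]
  have hkT : ∀ k, k ≤ n → Integrable (fun w : ℝ => w ^ k * (Tfun p α w * g w)) :=
    fun k hkn => (moment_split hp hα g hg0 hgm k (hWk k hkn)).1
  have hterm : ∀ k, k ≤ n →
      Integrable (fun w : ℝ => w ^ k * (1 / Znorm p σ α ρ δ g * (ρ + δ * Tfun p α w) * g w)) := by
    intro k hkn
    have he : (fun w : ℝ => w ^ k * (1 / Znorm p σ α ρ δ g * (ρ + δ * Tfun p α w) * g w))
        = fun w => (1 / Znorm p σ α ρ δ g * ρ) * (w ^ k * g w)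
            + (1 / Znorm p σ α ρ δ g * δ) * (w ^ k * (Tfun p α w * g w)) := by
      funext w; ring
    rw [he]
    exact ((hk1 k hkn).const_mul _).add ((hkT k hkn).const_mul _)
  rw [hcv, integral_congr_ae (Filter.Eventually.of_forall hbin),
    integral_finset_sum _ (fun k hk =>
      (hterm k (Finset.mem_range_succ_iff.mp hk)).const_mul _),
    Finset.mul_sum]
  refine Finset.sum_congr rfl fun k hk => ?_
  have hkn : k ≤ n := Finset.mem_range_succ_iff.mp hk
  rw [integral_const_mul]
  have hsplit : (fun w : ℝ => w ^ k * (1 / Znorm p σ α ρ δ g * (ρ + δ * Tfun p α w) * g w))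
      = fun w => (1 / Znorm p σ α ρ δ g * ρ) * (w ^ k * g w)
          + (1 / Znorm p σ α ρ δ g * δ) * (w ^ k * (Tfun p α w * g w)) := by
    funext w; ring
  rw [hsplit, integral_add ((hk1 k hkn).const_mul _) ((hkT k hkn).const_mul _),
    integral_const_mul, integral_const_mul, (moment_split hp hα g hg0 hgm k (hWk k hkn)).2]
  ring
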